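/- Let u be the function on [−1,1] × [0,1] defined piecewise by u(x,t) = 2(1−t)·(((x+t)/(1−t))² − 1) if x + t < −(1−t)/2, u(x,t) = 2x²/(1+t) + t − 2 if |x| ≤ (1+t)/2, and u(x,t) = 2(1−t)·(((x−t)/(1−t))² − 1) if x − t > (1−t)/2 (for t < 1), with u(x,1) = x² − 1. Then for every (x,t) ∈ (−1,1) × (0,1) with x + t < −(1−t)/2 one has ∂²u/∂x²(x,t) = 4/(1−t); moreover for every t ∈ (0,1), ∂u/∂x(−(1+t)/2, t) = −2 while lim_{x→−1⁺} ∂u/∂x(x,t) = −4. Consequently the second derivative ∂²u/∂x² is unbounded on (−1,1) × (0,1). -/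

import Mathlib

open Classical in
/-- The explicit weak geodesic of Example 2.1 joining `u₀(x) = 2(x²-1)` and
`u₁(x) = x²-1` on `U = (-1,1)`. -/
noncomputable def geo (x t : ℝ) : ℝ :=
  if t = 1 then x ^ 2 - 1
  else if x + t < -(1 - t) / 2 then 2 * (1 - t) * (((x + t) / (1 - t)) ^ 2 - 1)
  else if x - t > (1 - t) / 2 then 2 * (1 - t) * (((x - t) / (1 - t)) ^ 2 - 1)
  else 2 * x ^ 2 / (1 + t) + t - 2

lemma geo_eq_left {t : ℝ} (ht : t ≠ 1) {b : ℝ} (hb : b + t < -(1 - t) / 2) :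
    geo b t = 2 * (1 - t) * (((b + t) / (1 - t)) ^ 2 - 1) := by
  unfold geo
  rw [if_neg ht, if_pos hb]

lemma hasDerivAt_left {t : ℝ} (ht : t < 1) (x : ℝ) :
    HasDerivAt (fun b => 2 * (1 - t) * (((b + t) / (1 - t)) ^ 2 - 1))
      (4 * (x + t) / (1 - t)) x := by
  have h1 : (1 - t) ≠ 0 := by linarith
  have h : HasDerivAt (fun b : ℝ => 2 * (1 - t) * (((b + t) / (1 - t)) ^ 2 - 1))
      (2 * (1 - t) * ((2 : ℕ) * ((x + t) / (1 - t)) ^ 1 * (1 / (1 - t)))) x := by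
    exact ((((hasDerivAt_id x).add_const t).div_const (1 - t)).pow 2).sub_const 1
      |>.const_mul (2 * (1 - t))
  convert h using 1
  field_simp
  ring

lemma deriv_left {t : ℝ} (ht : t < 1) {x : ℝ} (hx : x + t < -(1 - t) / 2) :
    deriv (fun b => geo b t) x = 4 * (x + t) / (1 - t) := by
  have hS : IsOpen {b : ℝ | b + t < -(1 - t) / 2} :=
    isOpen_lt (by continuity) continuous_const
  have hev : (fun b => geo b t) =ᶠ[nhds x]
      (fun b => 2 * (1 - t) * (((b + t) / (1 - t)) ^ 2 - 1)) := by
    filter_upwards [hS.mem_nhds hx] with b hb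
    exact geo_eq_left ht.ne hb
  rw [hev.deriv_eq]
  exact (hasDerivAt_left ht x).deriv

lemma deriv2_left {t : ℝ} (ht : t < 1) {x : ℝ} (hx : x + t < -(1 - t) / 2) :
    deriv (fun a => deriv (fun b => geo b t) a) x = 4 / (1 - t) := by
  have hS : IsOpen {b : ℝ | b + t < -(1 - t) / 2} :=
    isOpen_lt (by continuity) continuous_const
  have hev : (fun a => deriv (fun b => geo b t) a) =ᶠ[nhds x]
      (fun a => 4 * (a + t) / (1 - t)) := by
    filter_upwards [hS.mem_nhds hx] with a ha
    exact deriv_left ht ha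
  rw [hev.deriv_eq]
  have h : HasDerivAt (fun a : ℝ => 4 * (a + t) / (1 - t)) (4 * 1 / (1 - t)) x :=
    (((hasDerivAt_id x).add_const t).const_mul 4).div_const (1 - t)
  simpa using h.deriv

/-- Example 2.1, quantified failure of global `C^{1,1}` regularity:
`∂²u/∂x² = 4/(1-t)` on the left region, `∂u/∂x(-(1+t)/2, t) = -2` while
`∂u/∂x → -4` as `x → -1⁺`, and consequently `∂²u/∂x²` is unbounded
on `(-1,1) × (0,1)`. -/
theorem stmt12 :
    (∀ x t : ℝ, (x, t) ∈ Set.Ioo (-1 : ℝ) 1 ×ˢ Set.Ioo (0 : ℝ) 1 →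
      x + t < -(1 - t) / 2 →
      deriv (fun a => deriv (fun b => geo b t) a) x = 4 / (1 - t)) ∧
    (∀ t ∈ Set.Ioo (0 : ℝ) 1, deriv (fun b => geo b t) (-(1 + t) / 2) = -2) ∧
    (∀ t ∈ Set.Ioo (0 : ℝ) 1,
      Filter.Tendsto (fun x => deriv (fun b => geo b t) x)
        (nhdsWithin (-1) (Set.Ioi (-1 : ℝ))) (nhds (-4))) ∧
    ∀ M : ℝ, ∃ x t : ℝ, (x, t) ∈ Set.Ioo (-1 : ℝ) 1 ×ˢ Set.Ioo (0 : ℝ) 1 ∧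
      M < |deriv (fun a => deriv (fun b => geo b t) a) x| := by
  refine ⟨?_, ?_, ?_, ?_⟩
  · rintro x t ⟨hx, ht⟩ hlt
    exact deriv2_left ht.2 hlt
  · rintro t ⟨ht0, ht1⟩
    have h1t : (1 - t) ≠ 0 := by linarith
    have h1t' : (1 + t) ≠ 0 := by linarith
    set x0 : ℝ := -(1 + t) / 2 with hx0
    -- middle branch value at x0 equals left branch value
    have hgeo_x0 : geo x0 t = 2 * (1 - t) * (((x0 + t) / (1 - t)) ^ 2 - 1) := by
      unfold geo
      rw [if_neg (by intro h; linarith : t ≠ 1),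
        if_neg (by rw [hx0]; push_neg; linarith),
        if_neg (by rw [hx0]; push_neg; linarith)]
      rw [hx0]
      field_simp
      ring
    -- left side
    have hL : HasDerivWithinAt (fun b => geo b t) (-2) (Set.Iic x0) x0 := by
      have hev : (fun b => geo b t) =ᶠ[nhdsWithin x0 (Set.Iic x0)]
          (fun b => 2 * (1 - t) * (((b + t) / (1 - t)) ^ 2 - 1)) := by
        filter_upwards [self_mem_nhdsWithin] with b hb
        have hb' : b ≤ x0 := hb
        rcases hb'.lt_or_eq with h | h
        · exact geo_eq_left (by intro h'; linarith : t ≠ 1) (by rw [hx0] at h; linarith)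
        · rw [h]; exact hgeo_x0
      have hd := (hasDerivAt_left (t := t) (by linarith) x0).hasDerivWithinAt
        (s := Set.Iic x0)
      have : (4 : ℝ) * (x0 + t) / (1 - t) = -2 := by
        rw [hx0]; field_simp; ring
      rw [this] at hd
      exact hd.congr_of_eventuallyEq hev hgeo_x0
    -- right side
    have hR : HasDerivWithinAt (fun b => geo b t) (-2) (Set.Ici x0) x0 := by
      have hmid : ∀ b ∈ Set.Ico x0 ((1 + t) / 2), geo b t = 2 * b ^ 2 / (1 + t) + t - 2 := by
        intro b hb
        unfold geo
        rw [if_neg (by intro h; linarith : t ≠ 1),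
          if_neg (by push_neg; have := hb.1; rw [hx0] at this; linarith),
          if_neg (by push_neg; have := hb.2; linarith)]
      have hmem : Set.Ico x0 ((1 + t) / 2) ∈ nhdsWithin x0 (Set.Ici x0) :=
        Ico_mem_nhdsGE (by rw [hx0]; linarith)
      have hev : (fun b => geo b t) =ᶠ[nhdsWithin x0 (Set.Ici x0)]
          (fun b => 2 * b ^ 2 / (1 + t) + t - 2) := by
        filter_upwards [hmem] with b hb
        exact hmid b hb
      have hd0 : HasDerivAt (fun b : ℝ => 2 * b ^ 2 / (1 + t) + t - 2) (-2) x0 := by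
        have h := ((((hasDerivAt_id x0).pow 2).const_mul 2).div_const (1 + t)).add_const t
          |>.sub_const 2
        simp only [id] at h
        convert h using 1
        · rfl
        · rfl
        · rfl
        · rw [hx0]; push_cast; field_simp
      have hx0mid : geo x0 t = 2 * x0 ^ 2 / (1 + t) + t - 2 :=
        hmid x0 ⟨le_refl _, by rw [hx0]; linarith⟩
      exact (hd0.hasDerivWithinAt (s := Set.Ici x0)).congr_of_eventuallyEq hev hx0mid
    have := hL.union hR
    rw [Set.Iic_union_Ici] at this
    rw [hasDerivWithinAt_univ] at this
    exact this.deriv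
  · rintro t ⟨ht0, ht1⟩
    have h1t : (1 - t) ≠ 0 := by linarith
    set x0 : ℝ := -(1 + t) / 2 with hx0
    have hmem : Set.Ioo (-1 : ℝ) x0 ∈ nhdsWithin (-1 : ℝ) (Set.Ioi (-1 : ℝ)) :=
      Ioo_mem_nhdsGT_of_mem ⟨le_refl _, by rw [hx0]; linarith⟩
    have hev : (fun x => deriv (fun b => geo b t) x) =ᶠ[nhdsWithin (-1) (Set.Ioi (-1 : ℝ))]
        (fun x => 4 * (x + t) / (1 - t)) := by
      filter_upwards [hmem] with x hx
      exact deriv_left ht1 (by have := hx.2; rw [hx0] at this; linarith)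
    refine Filter.Tendsto.congr' hev.symm ?_
    have hc : Filter.Tendsto (fun x : ℝ => 4 * (x + t) / (1 - t)) (nhds (-1))
        (nhds (4 * (-1 + t) / (1 - t))) := by
      exact ((continuous_const.mul (continuous_id.add continuous_const)).div_const (1 - t)).tendsto _
    have : (4 : ℝ) * (-1 + t) / (1 - t) = -4 := by field_simp; ring
    rw [this] at hc
    exact hc.mono_left nhdsWithin_le_nhds
  · intro M
    set c : ℝ := max M 1 + 1 with hc
    have hc1 : 1 < c := by have h := le_max_right M 1; rw [hc]; linarith
    have hcM : M < c := by have h := le_max_left M 1; rw [hc]; linarith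
    have hc0 : 0 < c := by linarith
    set t : ℝ := 1 - 1 / c with ht
    have ht0 : 0 < t := by
      rw [ht]
      have : 1 / c < 1 := by rw [div_lt_one hc0]; linarith
      linarith
    have ht1 : t < 1 := by
      rw [ht]
      have : 0 < 1 / c := by positivity
      linarith
    have h1mt : 1 - t = 1 / c := by rw [ht]; ring
    clear_value c
    clear_value t
    set x : ℝ := -(3 + t) / 4 with hx
    have hx1 : -1 < x := by rw [hx]; linarith
    have hx2 : x < 1 := by rw [hx]; linarith
    have hleft : x + t < -(1 - t) / 2 := by rw [hx]; linarith
    refine ⟨x, t, ⟨⟨hx1, hx2⟩, ⟨ht0, ht1⟩⟩, ?_⟩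
    rw [deriv2_left ht1 hleft]
    have h4c : (4 : ℝ) / (1 - t) = 4 * c := by
      rw [h1mt]; field_simp
    rw [h4c, abs_of_pos (by positivity)]
    nlinarith
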